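/- Let F be a finite simple graph on k vertices and let G and G' be two graphs on the same vertex set {1,…,n} that differ in exactly one edge (that is, their edge sets differ in exactly one pair). Then |t(F,G) − t(F,G')| ≤ k(k−1)/(n(n−1)). -/

import Mathlib

open MeasureTheory Filter
open scoped Classical

noncomputable section

/-- Number of injective graph homomorphisms of `F` into `G`. -/
def injHomCount {k n : ℕ} (F : SimpleGraph (Fin k)) (G : SimpleGraph (Fin n)) : ℕ :=
  Nat.card {f : Fin k → Fin n // Function.Injective f ∧ ∀ i j, F.Adj i j → G.Adj (f i) (f j)}

/-- Normalised subgraph count `t(F,G) = |inj(F,G)| / (n)_k`. -/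
def subCount {k n : ℕ} (F : SimpleGraph (Fin k)) (G : SimpleGraph (Fin n)) : ℝ :=
  (injHomCount F G : ℝ) / (n.descFactorial k : ℝ)

open Finset

/-- The finset of injective homomorphisms. -/
private def homSet {k n : ℕ} (F : SimpleGraph (Fin k)) (H : SimpleGraph (Fin n)) :
    Finset (Fin k → Fin n) :=
  univ.filter (fun f => Function.Injective f ∧ ∀ i j, F.Adj i j → H.Adj (f i) (f j))

private lemma injHomCount_eq {k n : ℕ} (F : SimpleGraph (Fin k)) (H : SimpleGraph (Fin n)) :
    injHomCount F H = (homSet F H).card := by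
  rw [injHomCount, Nat.card_eq_fintype_card, homSet]
  convert Fintype.card_subtype _

/-- the "bad" set -/
private def badSet {k n : ℕ} (u v : Fin n) : Finset (Fin k → Fin n) :=
  univ.filter (fun f => Function.Injective f ∧ ∃ i j : Fin k, i ≠ j ∧ f i = u ∧ f j = v)

private lemma homSet_sdiff_subset {k n : ℕ} (F : SimpleGraph (Fin k))
    (H H' : SimpleGraph (Fin n)) (u v : Fin n)
    (key : ∀ a : Sym2 (Fin n), a ∈ H.edgeSet → a ∉ H'.edgeSet → a = s(u, v)) :
    homSet F H \ homSet F H' ⊆ badSet u v := by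
  intro f hf
  rw [Finset.mem_sdiff, homSet, homSet, mem_filter, mem_filter] at hf
  obtain ⟨⟨-, hinj, hhom⟩, hnot⟩ := hf
  push_neg at hnot
  obtain ⟨i, j, hadj, hnadj⟩ := hnot (mem_univ f) hinj
  have h1 : s(f i, f j) ∈ H.edgeSet := hhom i j hadj
  have h2 : s(f i, f j) ∉ H'.edgeSet := hnadj
  have heq := key _ h1 h2
  rw [Sym2.eq_iff] at heq
  rw [badSet, mem_filter]
  refine ⟨mem_univ f, hinj, ?_⟩
  rcases heq with ⟨hu, hv⟩ | ⟨hv, hu⟩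
  · exact ⟨i, j, hadj.ne, hu, hv⟩
  · exact ⟨j, i, hadj.ne', hu, hv⟩

private lemma badSet_card_le {k n : ℕ} (u v : Fin n) (hne : u ≠ v) :
    (badSet (k := k) u v).card ≤ k * ((k - 1) * (n - 2).descFactorial (k - 2)) := by
  classical
  set m := (n - 2).descFactorial (k - 2) with hm
  set Q : Fin k → Fin k → Finset (Fin k → Fin n) := fun i j =>
    univ.filter (fun f => Function.Injective f ∧ f i = u ∧ f j = v) with hQ
  have hQcard : ∀ i j : Fin k, i ≠ j → (Q i j).card ≤ m := by
    intro i j hij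
    have hcard : (Q i j).card = Fintype.card (Q i j) := (Fintype.card_coe _).symm
    rw [hcard]
    -- inject into embeddings
    set S := {l : Fin k // l ≠ i ∧ l ≠ j}
    set T := {w : Fin n // w ≠ u ∧ w ≠ v}
    have hg : ∃ g : (Q i j) → (S ↪ T), Function.Injective g := by
      refine ⟨fun x => ⟨fun l => ⟨x.1 l.1, ?_, ?_⟩, ?_⟩, ?_⟩
      · obtain ⟨-, hinj, hu, hv⟩ := mem_filter.mp x.2
        intro h
        exact l.2.1 (hinj (h.trans hu.symm))
      · obtain ⟨-, hinj, hu, hv⟩ := mem_filter.mp x.2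
        intro h
        exact l.2.2 (hinj (h.trans hv.symm))
      · intro l₁ l₂ h
        obtain ⟨-, hinj, -, -⟩ := mem_filter.mp x.2
        exact Subtype.ext (hinj (Subtype.ext_iff.mp h))
      · intro x y hxy
        obtain ⟨-, hxinj, hxu, hxv⟩ := mem_filter.mp x.2
        obtain ⟨-, hyinj, hyu, hyv⟩ := mem_filter.mp y.2
        apply Subtype.ext
        funext l
        by_cases hli : l = i
        · rw [hli, hxu, hyu]
        by_cases hlj : l = j
        · rw [hlj, hxv, hyv]
        · have := congrFun (congrArg (fun (E : S ↪ T) => (E : S → T)) hxy) ⟨l, hli, hlj⟩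
          exact Subtype.ext_iff.mp this
      
    obtain ⟨g, hginj⟩ := hg
    have := Fintype.card_le_of_injective g hginj
    refine this.trans (le_of_eq ?_)
    rw [Fintype.card_embedding_eq]
    have hS : Fintype.card S = k - 2 := by
      rw [Fintype.card_subtype]
      have : (univ.filter (fun l : Fin k => l ≠ i ∧ l ≠ j)) = univ \ {i, j} := by
        ext l; simp [not_or]
      rw [this, Finset.card_sdiff_of_subset (Finset.subset_univ _), card_univ, Fintype.card_fin,
        Finset.card_insert_of_notMem (by simpa using hij), Finset.card_singleton]
    have hT : Fintype.card T = n - 2 := by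
      rw [Fintype.card_subtype]
      have : (univ.filter (fun w : Fin n => w ≠ u ∧ w ≠ v)) = univ \ {u, v} := by
        ext w; simp [not_or]
      rw [this, Finset.card_sdiff_of_subset (Finset.subset_univ _), card_univ, Fintype.card_fin,
        Finset.card_insert_of_notMem (by simpa using hne), Finset.card_singleton]
    rw [hS, hT]
  have hsub : badSet (k := k) u v ⊆
      univ.biUnion (fun i : Fin k => (univ.erase i).biUnion (fun j => Q i j)) := by
    intro f hf
    rw [badSet, mem_filter] at hf
    obtain ⟨-, hinj, i, j, hij, hu, hv⟩ := hf
    rw [mem_biUnion]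
    exact ⟨i, mem_univ i, mem_biUnion.mpr ⟨j, Finset.mem_erase.mpr ⟨hij.symm, mem_univ j⟩,
      mem_filter.mpr ⟨mem_univ f, hinj, hu, hv⟩⟩⟩
  calc (badSet (k := k) u v).card
      ≤ (univ.biUnion (fun i : Fin k => (univ.erase i).biUnion (fun j => Q i j))).card :=
        Finset.card_le_card hsub
    _ ≤ ∑ i : Fin k, ((univ.erase i).biUnion (fun j => Q i j)).card := Finset.card_biUnion_le
    _ ≤ ∑ i : Fin k, ∑ j ∈ univ.erase i, (Q i j).card :=
        Finset.sum_le_sum (fun i _ => Finset.card_biUnion_le)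
    _ ≤ ∑ i : Fin k, ∑ j ∈ univ.erase i, m := by
        refine Finset.sum_le_sum (fun i _ => Finset.sum_le_sum (fun j hj => ?_))
        exact hQcard i j (Finset.ne_of_mem_erase hj).symm
    _ = k * ((k - 1) * m) := by
        simp [Finset.sum_const, Finset.card_erase_of_mem, mul_comm]

/-- If two graphs `G, G'` on the vertex set `{1,…,n}` differ in exactly one
edge, then `|t(F,G) - t(F,G')| ≤ k(k-1)/(n(n-1))` for any graph `F` on `k` vertices. -/
theorem subCount_edge_change {k n : ℕ} (F : SimpleGraph (Fin k))
    (G G' : SimpleGraph (Fin n))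
    (hdiff : ∃ e : Sym2 (Fin n), symmDiff G.edgeSet G'.edgeSet = {e}) :
    |subCount F G - subCount F G'| ≤ ((k : ℝ) * ((k : ℝ) - 1)) / ((n : ℝ) * ((n : ℝ) - 1)) := by
  obtain ⟨e, he⟩ := hdiff
  have hee : e ∈ symmDiff G.edgeSet G'.edgeSet := by rw [he]; rfl
  have hnd : ¬ e.IsDiag := by
    rcases Set.mem_symmDiff.mp hee with ⟨h1, -⟩ | ⟨h1, -⟩
    · exact G.not_isDiag_of_mem_edgeSet h1
    · exact G'.not_isDiag_of_mem_edgeSet h1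
  revert he hnd
  induction e using Sym2.ind with
  | _ u v =>
  intro he hnd
  have hne : u ≠ v := by simpa using hnd
  have key : ∀ a : Sym2 (Fin n), a ∈ G.edgeSet → a ∉ G'.edgeSet → a = s(u, v) := by
    intro a h1 h2
    have : a ∈ symmDiff G.edgeSet G'.edgeSet := Set.mem_symmDiff.mpr (Or.inl ⟨h1, h2⟩)
    rwa [he] at this
  have key' : ∀ a : Sym2 (Fin n), a ∈ G'.edgeSet → a ∉ G.edgeSet → a = s(u, v) := by
    intro a h1 h2
    have : a ∈ symmDiff G.edgeSet G'.edgeSet := Set.mem_symmDiff.mpr (Or.inr ⟨h1, h2⟩)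
    rwa [he] at this
  have hn2 : 2 ≤ n := by
    by_contra h
    push_neg at h
    interval_cases n
    · exact absurd u.2 (by simp)
    · exact hne (Subsingleton.elim u v)
  set a := (homSet F G).card with ha
  set b := (homSet F G').card with hb
  set c := (badSet (k := k) u v).card with hc
  have h1 : a ≤ b + c := by
    calc a ≤ (homSet F G \ homSet F G').card + (homSet F G').card :=
          Finset.card_le_card_sdiff_add_card
      _ ≤ c + b := by
          gcongr
          exact Finset.card_le_card (homSet_sdiff_subset F G G' u v key)
      _ = b + c := Nat.add_comm c b
  have h2 : b ≤ a + c := by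
    calc b ≤ (homSet F G' \ homSet F G).card + (homSet F G).card :=
          Finset.card_le_card_sdiff_add_card
      _ ≤ c + a := by
          gcongr
          exact Finset.card_le_card (homSet_sdiff_subset F G' G u v key')
      _ = a + c := Nat.add_comm c a
  have habs : |(a : ℝ) - b| ≤ (c : ℝ) := by
    rw [abs_sub_le_iff]
    constructor
    · have : (a : ℝ) ≤ b + c := by exact_mod_cast h1
      linarith
    · have : (b : ℝ) ≤ a + c := by exact_mod_cast h2
      linarith
  have hcb : c ≤ k * ((k - 1) * (n - 2).descFactorial (k - 2)) := badSet_card_le u v hne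
  rw [subCount, subCount, injHomCount_eq, injHomCount_eq, ← ha, ← hb, div_sub_div_same]
  set d := n.descFactorial k with hd
  rcases Nat.eq_zero_or_pos d with hd0 | hdpos
  · rw [hd0]
    simp only [Nat.cast_zero, div_zero, abs_zero]
    apply div_nonneg
    · rcases Nat.eq_zero_or_pos k with rfl | hk
      · norm_num
      · have : (1 : ℝ) ≤ k := by exact_mod_cast hk
        nlinarith
    · have : (2 : ℝ) ≤ n := by exact_mod_cast hn2
      nlinarith
  · rw [abs_div, abs_of_nonneg (by positivity : (0:ℝ) ≤ (d:ℝ))]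
    rcases Nat.lt_or_ge k 2 with hk2 | hk2
    · -- k ≤ 1 : badSet is empty-ish: c ≤ k * 0 = 0 fails for k = 1? k-1 = 0 so bound 0
      have hc0 : c = 0 := by
        have h0 : k - 1 = 0 := by omega
        rw [h0, zero_mul, mul_zero] at hcb
        omega
      have : a = b := by omega
      rw [this, sub_self, abs_zero, zero_div]
      apply div_nonneg
      · rcases Nat.eq_zero_or_pos k with h | h
        · simp [h]
        · have : (1 : ℝ) ≤ k := by exact_mod_cast h
          nlinarith
      · have : (2 : ℝ) ≤ n := by exact_mod_cast hn2
        nlinarith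
    · -- main case k ≥ 2, n ≥ 2
      obtain ⟨k', rfl⟩ : ∃ k', k = k' + 2 := ⟨k - 2, by omega⟩
      obtain ⟨n', rfl⟩ : ∃ n', n = n' + 2 := ⟨n - 2, by omega⟩
      have hdfac : d = (n' + 2) * ((n' + 1) * n'.descFactorial k') := by
        rw [hd, Nat.succ_descFactorial_succ, Nat.succ_descFactorial_succ]
      have hnat : c * ((n' + 2) * (n' + 1)) ≤ ((k' + 2) * (k' + 1)) * d := by
        rw [hdfac]
        have hcb' : c ≤ (k' + 2) * ((k' + 1) * n'.descFactorial k') := by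
          simpa using hcb
        calc c * ((n' + 2) * (n' + 1))
            ≤ ((k' + 2) * ((k' + 1) * n'.descFactorial k')) * ((n' + 2) * (n' + 1)) :=
              Nat.mul_le_mul_right _ hcb'
          _ = ((k' + 2) * (k' + 1)) * ((n' + 2) * ((n' + 1) * n'.descFactorial k')) := by ring
      have hrw : ((k' + 2 : ℕ) : ℝ) * (((k' + 2 : ℕ) : ℝ) - 1) = (((k' + 2) * (k' + 1) : ℕ) : ℝ) := by
        push_cast; ring
      have hrwn : ((n' + 2 : ℕ) : ℝ) * (((n' + 2 : ℕ) : ℝ) - 1) = (((n' + 2) * (n' + 1) : ℕ) : ℝ) := by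
        push_cast; ring
      rw [hrw, hrwn]
      have hdpos' : (0 : ℝ) < d := by exact_mod_cast hdpos
      have hnpos : (0 : ℝ) < (((n' + 2) * (n' + 1) : ℕ) : ℝ) := by positivity
      rw [div_le_div_iff₀ hdpos' hnpos]
      calc |(a : ℝ) - b| * (((n' + 2) * (n' + 1) : ℕ) : ℝ)
          ≤ (c : ℝ) * (((n' + 2) * (n' + 1) : ℕ) : ℝ) := by
            apply mul_le_mul_of_nonneg_right habs (by positivity)
        _ ≤ (((k' + 2) * (k' + 1) : ℕ) : ℝ) * d := by exact_mod_cast hnat
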